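/- Wronskian identity for the modified Bessel functions: for every x > 0, K₀(x)·I₁(x) + I₀(x)·K₁(x) = 1/x. -/

import Mathlib

open Real MeasureTheory Set

/-- The modified Bessel function of the first kind of order zero,
`I₀(x) = (1/π) ∫₀^π exp (x cos θ) dθ`. -/
noncomputable def I0 (x : ℝ) : ℝ := (1 / π) * ∫ θ in (0:ℝ)..π, Real.exp (x * Real.cos θ)

/-- The modified Bessel function of the first kind of order one,
`I₁(x) = (1/π) ∫₀^π exp (x cos θ) cos θ dθ`. -/
noncomputable def I1 (x : ℝ) : ℝ :=
  (1 / π) * ∫ θ in (0:ℝ)..π, Real.exp (x * Real.cos θ) * Real.cos θ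

/-- The modified Bessel function of the second kind of order zero,
`K₀(x) = ∫₀^∞ exp (−x cosh t) dt`. -/
noncomputable def K0 (x : ℝ) : ℝ := ∫ t in Ioi (0:ℝ), Real.exp (-x * Real.cosh t)

/-- The modified Bessel function of the second kind of order one,
`K₁(x) = ∫₀^∞ exp (−x cosh t) cosh t dt`. -/
noncomputable def K1 (x : ℝ) : ℝ :=
  ∫ t in Ioi (0:ℝ), Real.exp (-x * Real.cosh t) * Real.cosh t


open Filter Topology


lemma cosh_lower (t : ℝ) (ht : 0 ≤ t) : 1 + t ^ 2 / 4 ≤ Real.cosh t := by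
  rw [Real.cosh_eq]
  have h1 : 1 + t + t ^ 2 / 2 ≤ Real.exp t := Real.quadratic_le_exp_of_nonneg ht
  have h2 : (1 : ℝ) - t ≤ Real.exp (-t) := by
    have := Real.add_one_le_exp (-t); linarith
  nlinarith

lemma self_le_cosh (t : ℝ) (ht : 0 ≤ t) : t ≤ Real.cosh t := by
  have := cosh_lower t ht; nlinarith [sq_nonneg (t-2)]

lemma pow_mul_exp_neg_le {c u : ℝ} (hc : 0 < c) (hu : 0 ≤ u) (n : ℕ) :
    u ^ n * Real.exp (-(c * u)) ≤ n.factorial * (1 / c) ^ n := by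
  have h := Real.pow_div_factorial_le_exp (x := c * u) (by positivity) n
  have hexp : 0 < Real.exp (c * u) := Real.exp_pos _
  have hn : (0:ℝ) < n.factorial := by positivity
  rw [div_le_iff₀ hn] at h
  have h2 : u ^ n ≤ n.factorial * (1 / c) ^ n * Real.exp (c * u) := by
    have hcn : (0:ℝ) < c ^ n := by positivity
    rw [mul_pow] at h
    calc u ^ n = (c ^ n * u ^ n) / c ^ n := by field_simp
    _ ≤ (Real.exp (c * u) * n.factorial) / c ^ n := by gcongr
    _ = n.factorial * (1 / c) ^ n * Real.exp (c * u) := by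
        rw [one_div_pow]; field_simp
  calc u ^ n * Real.exp (-(c * u)) ≤ (n.factorial * (1 / c) ^ n * Real.exp (c * u)) * Real.exp (-(c*u)) := by
        apply mul_le_mul_of_nonneg_right h2 (Real.exp_pos _).le
  _ = n.factorial * (1 / c) ^ n := by rw [mul_assoc, ← Real.exp_add]; simp

/-- master decay bound -/
lemma cosh_pow_exp_bound {x : ℝ} (hx : 0 < x) (n : ℕ) {t : ℝ} (ht : 0 ≤ t) :
    Real.cosh t ^ n * Real.exp (-x * Real.cosh t)
      ≤ (n.factorial * (2 / x) ^ n) * Real.exp (-(x / 2) * t) := by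
  have hc := Real.cosh_pos t
  have key : Real.cosh t ^ n * Real.exp (-((x/2) * Real.cosh t)) ≤ n.factorial * (1 / (x/2)) ^ n :=
    pow_mul_exp_neg_le (by positivity) hc.le n
  have hsplit : Real.exp (-x * Real.cosh t)
      = Real.exp (-((x/2) * Real.cosh t)) * Real.exp (-((x/2) * Real.cosh t)) := by
    rw [← Real.exp_add]; ring_nf
  have hmono : Real.exp (-((x/2) * Real.cosh t)) ≤ Real.exp (-(x / 2) * t) := by
    apply Real.exp_le_exp.2
    have := self_le_cosh t ht
    nlinarith
  have h1 : (1 / (x/2)) = 2 / x := by field_simp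
  calc Real.cosh t ^ n * Real.exp (-x * Real.cosh t)
      = (Real.cosh t ^ n * Real.exp (-((x/2) * Real.cosh t))) * Real.exp (-((x/2) * Real.cosh t)) := by
        rw [hsplit]; ring
    _ ≤ (n.factorial * (1 / (x/2)) ^ n) * Real.exp (-(x / 2) * t) := by
        apply mul_le_mul key hmono (Real.exp_pos _).le (by positivity)
    _ = (n.factorial * (2 / x) ^ n) * Real.exp (-(x / 2) * t) := by rw [h1]

lemma integrableOn_cosh_pow {x : ℝ} (hx : 0 < x) (n : ℕ) :
    IntegrableOn (fun t => Real.cosh t ^ n * Real.exp (-x * Real.cosh t)) (Ioi 0) := by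
  apply Integrable.mono' (g := fun t => (n.factorial * (2 / x) ^ n) * Real.exp (-(x / 2) * t))
  · exact (exp_neg_integrableOn_Ioi 0 (by positivity)).const_mul _
  · exact ((Real.continuous_cosh.pow n).mul
      ((Real.continuous_exp.comp (continuous_const.mul Real.continuous_cosh)))).aestronglyMeasurable
  · filter_upwards [ae_restrict_mem measurableSet_Ioi] with t ht
    rw [Real.norm_eq_abs, abs_of_nonneg (by positivity)]
    exact cosh_pow_exp_bound hx n (le_of_lt ht)

lemma integrableOn_dom {x : ℝ} (hx : 0 < x) {f : ℝ → ℝ} (hf : Continuous f) (n : ℕ)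
    (hb : ∀ t, 0 ≤ t → |f t| ≤ Real.cosh t ^ n) :
    IntegrableOn (fun t => f t * Real.exp (-x * Real.cosh t)) (Ioi 0) := by
  apply Integrable.mono' (integrableOn_cosh_pow hx n)
  · exact (hf.mul (Real.continuous_exp.comp
      (continuous_const.mul Real.continuous_cosh))).aestronglyMeasurable
  · filter_upwards [ae_restrict_mem measurableSet_Ioi] with t ht
    rw [Real.norm_eq_abs, abs_mul, abs_of_nonneg (Real.exp_pos _).le]
    exact mul_le_mul_of_nonneg_right (hb t ht.le) (Real.exp_pos _).le






lemma abs_sinh_le_cosh (t : ℝ) : |Real.sinh t| ≤ Real.cosh t := by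
  rw [Real.abs_sinh, ← Real.cosh_abs]
  rw [Real.sinh_eq, Real.cosh_eq]
  have := Real.exp_pos (-|t|)
  linarith

lemma tendsto_exp_decay {x : ℝ} (hx : 0 < x) (C : ℝ) :
    Tendsto (fun t : ℝ => C * Real.exp (-(x / 2) * t)) atTop (𝓝 0) := by
  have h : Tendsto (fun t : ℝ => -(x / 2) * t) atTop atBot :=
    Tendsto.const_mul_atTop_of_neg (by linarith) tendsto_id
  simpa using (Real.tendsto_exp_atBot.comp h).const_mul C

/-- pointwise derivative of `exp (-x * cosh t)` in `t` -/
lemma hasDerivAt_exp_neg_cosh (x t : ℝ) :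
    HasDerivAt (fun t => Real.exp (-x * Real.cosh t))
      (-x * Real.sinh t * Real.exp (-x * Real.cosh t)) t := by
  have h : HasDerivAt (fun t => -x * Real.cosh t) (-x * Real.sinh t) t :=
    (Real.hasDerivAt_cosh t).const_mul (-x)
  simpa [mul_comm] using h.exp

/-- `∫ sinh² exp(-x cosh) = K1 x / x` -/
lemma sinh_sq_integral {x : ℝ} (hx : 0 < x) :
    ∫ t in Ioi (0:ℝ), Real.sinh t ^ 2 * Real.exp (-x * Real.cosh t) = K1 x / x := by
  set f : ℝ → ℝ := fun t => Real.sinh t * Real.exp (-x * Real.cosh t) with hf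
  set f' : ℝ → ℝ := fun t =>
    Real.cosh t * Real.exp (-x * Real.cosh t) - x * (Real.sinh t ^ 2 * Real.exp (-x * Real.cosh t)) with hf'
  have hderiv : ∀ t ∈ Ici (0:ℝ), HasDerivAt f (f' t) t := by
    intro t _
    have := (Real.hasDerivAt_sinh t).mul (hasDerivAt_exp_neg_cosh x t)
    refine this.congr_deriv ?_
    simp only [hf']; ring
  have hint1 : IntegrableOn (fun t => Real.cosh t * Real.exp (-x * Real.cosh t)) (Ioi 0) := by
    simpa using integrableOn_cosh_pow hx 1
  have hint2 : IntegrableOn (fun t => Real.sinh t ^ 2 * Real.exp (-x * Real.cosh t)) (Ioi 0) := by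
    apply integrableOn_dom hx (by continuity) 2
    intro t ht
    rw [abs_of_nonneg (sq_nonneg _)]
    nlinarith [Real.cosh_sq t, Real.cosh_pos t, sq_nonneg (Real.sinh t)]
  have hf'int : IntegrableOn f' (Ioi 0) := hint1.sub (hint2.const_mul x)
  have hlim : Tendsto f atTop (𝓝 0) := by
    have hb : ∀ᶠ t in atTop, ‖f t‖ ≤ (fun t => ((Nat.factorial 1 : ℝ) * (2 / x) ^ 1) * Real.exp (-(x / 2) * t)) t := by
      filter_upwards [eventually_ge_atTop (0:ℝ)] with t ht
      rw [hf, Real.norm_eq_abs, abs_mul, abs_of_nonneg (Real.exp_pos _).le]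
      calc |Real.sinh t| * Real.exp (-x * Real.cosh t)
          ≤ Real.cosh t * Real.exp (-x * Real.cosh t) :=
            mul_le_mul_of_nonneg_right (abs_sinh_le_cosh t) (Real.exp_pos _).le
        _ ≤ _ := by simpa using cosh_pow_exp_bound hx 1 ht
    exact squeeze_zero_norm' hb (tendsto_exp_decay hx _)
  have key : ∫ t in Ioi (0:ℝ), f' t = 0 - f 0 :=
    MeasureTheory.integral_Ioi_of_hasDerivAt_of_tendsto' hderiv hf'int hlim
  have hf0 : f 0 = 0 := by simp [hf]
  rw [hf0, sub_zero] at key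
  have split : ∫ t in Ioi (0:ℝ), f' t
      = (∫ t in Ioi (0:ℝ), Real.cosh t * Real.exp (-x * Real.cosh t))
        - x * ∫ t in Ioi (0:ℝ), Real.sinh t ^ 2 * Real.exp (-x * Real.cosh t) := by
    rw [hf', integral_sub hint1 (hint2.const_mul x), integral_const_mul]
  have hK1 : K1 x = ∫ t in Ioi (0:ℝ), Real.cosh t * Real.exp (-x * Real.cosh t) := by
    unfold K1; congr 1; ext t; ring
  rw [split, hK1.symm] at key
  rw [eq_div_iff (ne_of_gt hx)]
  linarith









lemma cosh_sq_integral {x : ℝ} (hx : 0 < x) :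
    ∫ t in Ioi (0:ℝ), Real.cosh t ^ 2 * Real.exp (-x * Real.cosh t) = K0 x + K1 x / x := by
  have hint0 : IntegrableOn (fun t => Real.exp (-x * Real.cosh t)) (Ioi 0) := by
    simpa using integrableOn_cosh_pow hx 0
  have hint2 : IntegrableOn (fun t => Real.sinh t ^ 2 * Real.exp (-x * Real.cosh t)) (Ioi 0) := by
    apply (integrableOn_cosh_pow hx 2).mono'
    · exact (((Real.continuous_sinh.pow 2)).mul (Real.continuous_exp.comp
        (continuous_const.mul Real.continuous_cosh))).aestronglyMeasurable
    · filter_upwards [ae_restrict_mem measurableSet_Ioi] with t _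
      rw [Real.norm_eq_abs, abs_mul, abs_of_nonneg (Real.exp_pos _).le, abs_of_nonneg (sq_nonneg _)]
      apply mul_le_mul_of_nonneg_right _ (Real.exp_pos _).le
      calc Real.sinh t ^ 2 = |Real.sinh t| ^ 2 := (sq_abs _).symm
        _ ≤ Real.cosh t ^ 2 := by
            apply pow_le_pow_left₀ (abs_nonneg _) (abs_sinh_le_cosh t)
  calc ∫ t in Ioi (0:ℝ), Real.cosh t ^ 2 * Real.exp (-x * Real.cosh t)
      = ∫ t in Ioi (0:ℝ), (Real.exp (-x * Real.cosh t)
          + Real.sinh t ^ 2 * Real.exp (-x * Real.cosh t)) := by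
        congr 1; ext t
        have := Real.cosh_sq t
        nlinarith [Real.exp_pos (-x * Real.cosh t)]
    _ = K0 x + K1 x / x := by
        rw [integral_add hint0 hint2, sinh_sq_integral hx]; rfl

lemma hasDerivAt_K0 {x : ℝ} (hx : 0 < x) : HasDerivAt K0 (-K1 x) x := by
  have main := hasDerivAt_integral_of_dominated_loc_of_deriv_le
    (μ := volume.restrict (Ioi (0:ℝ))) (x₀ := x)
    (F := fun y t => Real.exp (-y * Real.cosh t))
    (F' := fun y t => -(Real.cosh t * Real.exp (-y * Real.cosh t)))
    (bound := fun t => Real.cosh t * Real.exp (-(x/2) * Real.cosh t))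
    (Metric.ball_mem_nhds x (half_pos hx))
    (Eventually.of_forall fun y => (Real.continuous_exp.comp
        (continuous_const.mul Real.continuous_cosh)).aestronglyMeasurable)
    (by simpa [IntegrableOn] using integrableOn_cosh_pow hx 0)
    ((Real.continuous_cosh.mul (Real.continuous_exp.comp
        (continuous_const.mul Real.continuous_cosh))).neg.aestronglyMeasurable)
    ?_ (by simpa [IntegrableOn] using integrableOn_cosh_pow (half_pos hx) 1) ?_
  · have : K1 x = ∫ t in Ioi (0:ℝ), Real.cosh t * Real.exp (-x * Real.cosh t) := by
      unfold K1; congr 1; ext t; ring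
    have h2 := main.2
    rw [integral_neg] at h2
    rw [show (-K1 x) = -∫ t in Ioi (0:ℝ), Real.cosh t * Real.exp (-x * Real.cosh t) by rw [this]]
    exact h2
  · filter_upwards [ae_restrict_mem measurableSet_Ioi] with t _
    intro y hy
    rw [Metric.mem_ball, Real.dist_eq] at hy
    have hy2 : x / 2 ≤ y := by cases abs_lt.1 hy; linarith
    rw [norm_neg, Real.norm_eq_abs, abs_mul, abs_of_nonneg (Real.cosh_pos t).le,
      abs_of_nonneg (Real.exp_pos _).le]
    apply mul_le_mul_of_nonneg_left _ (Real.cosh_pos t).le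
    apply Real.exp_le_exp.2
    nlinarith [Real.cosh_pos t]
  · filter_upwards [] with t
    intro y hy
    have h : HasDerivAt (fun y => -y * Real.cosh t) (-Real.cosh t) y := by
      simpa using (hasDerivAt_id y).neg.mul_const (Real.cosh t)
    have := h.exp
    exact this.congr_deriv (by ring)

lemma hasDerivAt_K1 {x : ℝ} (hx : 0 < x) : HasDerivAt K1 (-(K0 x + K1 x / x)) x := by
  have main := hasDerivAt_integral_of_dominated_loc_of_deriv_le
    (μ := volume.restrict (Ioi (0:ℝ))) (x₀ := x)
    (F := fun y t => Real.exp (-y * Real.cosh t) * Real.cosh t)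
    (F' := fun y t => -(Real.cosh t ^ 2 * Real.exp (-y * Real.cosh t)))
    (bound := fun t => Real.cosh t ^ 2 * Real.exp (-(x/2) * Real.cosh t))
    (Metric.ball_mem_nhds x (half_pos hx))
    (Eventually.of_forall fun y => ((Real.continuous_exp.comp
        (continuous_const.mul Real.continuous_cosh)).mul Real.continuous_cosh).aestronglyMeasurable)
    ?_
    (((Real.continuous_cosh.pow 2).mul (Real.continuous_exp.comp
        (continuous_const.mul Real.continuous_cosh))).neg.aestronglyMeasurable)
    ?_ (by simpa [IntegrableOn] using integrableOn_cosh_pow (half_pos hx) 2) ?_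
  · have h2 := main.2
    rw [integral_neg, cosh_sq_integral hx] at h2
    exact h2
  · have := integrableOn_cosh_pow hx 1
    apply this.congr_fun ?_ measurableSet_Ioi
    intro t _; simp [pow_one]; ring
  · filter_upwards [ae_restrict_mem measurableSet_Ioi] with t _
    intro y hy
    rw [Metric.mem_ball, Real.dist_eq] at hy
    have hy2 : x / 2 ≤ y := by cases abs_lt.1 hy; linarith
    rw [norm_neg, Real.norm_eq_abs, abs_mul, abs_of_nonneg (sq_nonneg _),
      abs_of_nonneg (Real.exp_pos _).le]
    apply mul_le_mul_of_nonneg_left _ (sq_nonneg _)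
    apply Real.exp_le_exp.2
    nlinarith [Real.cosh_pos t]
  · filter_upwards [] with t
    intro y hy
    have h : HasDerivAt (fun y => -y * Real.cosh t) (-Real.cosh t) y := by
      simpa using (hasDerivAt_id y).neg.mul_const (Real.cosh t)
    have := (h.exp).mul_const (Real.cosh t)
    exact this.congr_deriv (by ring)

lemma sinh_exp_integral {x : ℝ} (hx : 0 < x) :
    ∫ t in Ioi (0:ℝ), Real.sinh t * Real.exp (-x * Real.cosh t) = Real.exp (-x) / x := by
  set f : ℝ → ℝ := fun t => -(1/x) * Real.exp (-x * Real.cosh t) with hfdef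
  have hderiv : ∀ t ∈ Ici (0:ℝ), HasDerivAt f
      (Real.sinh t * Real.exp (-x * Real.cosh t)) t := by
    intro t _
    have := (hasDerivAt_exp_neg_cosh x t).const_mul (-(1/x))
    exact this.congr_deriv (by rw [← mul_assoc, ← mul_assoc, neg_mul_neg, one_div_mul_cancel hx.ne', one_mul])
  have hint : IntegrableOn (fun t => Real.sinh t * Real.exp (-x * Real.cosh t)) (Ioi 0) := by
    apply (integrableOn_cosh_pow hx 1).mono'
    · exact (Real.continuous_sinh.mul (Real.continuous_exp.comp
        (continuous_const.mul Real.continuous_cosh))).aestronglyMeasurable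
    · filter_upwards [ae_restrict_mem measurableSet_Ioi] with t _
      rw [Real.norm_eq_abs, abs_mul, abs_of_nonneg (Real.exp_pos _).le, pow_one]
      exact mul_le_mul_of_nonneg_right (abs_sinh_le_cosh t) (Real.exp_pos _).le
  have hlim : Tendsto f atTop (𝓝 0) := by
    have hb : ∀ᶠ t in atTop, ‖f t‖ ≤ (fun t => ((1/x) * (Nat.factorial 0 * (2 / x) ^ 0)) * Real.exp (-(x / 2) * t)) t := by
      filter_upwards [eventually_ge_atTop (0:ℝ)] with t ht
      rw [hfdef, Real.norm_eq_abs, abs_mul, abs_of_nonneg (Real.exp_pos _).le]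
      rw [abs_neg, abs_of_nonneg (by positivity : (0:ℝ) ≤ 1/x), mul_assoc]
      apply mul_le_mul_of_nonneg_left _ (by positivity)
      simpa using cosh_pow_exp_bound hx 0 ht
    exact squeeze_zero_norm' hb (tendsto_exp_decay hx _)
  have key := MeasureTheory.integral_Ioi_of_hasDerivAt_of_tendsto' hderiv hint hlim
  rw [key, hfdef]
  simp [Real.cosh_zero]
  field_simp



lemma hasDerivAt_I_integral (x : ℝ) (g : ℝ → ℝ) (hg : Continuous g) (hgb : ∀ θ, |g θ| ≤ 1) :
    HasDerivAt (fun y => ∫ θ in (0:ℝ)..π, Real.exp (y * Real.cos θ) * g θ)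
      (∫ θ in (0:ℝ)..π, Real.exp (x * Real.cos θ) * Real.cos θ * g θ) x := by
  have main := intervalIntegral.hasDerivAt_integral_of_dominated_loc_of_deriv_le
    (μ := volume) (a := (0:ℝ)) (b := π) (x₀ := x)
    (F := fun y θ => Real.exp (y * Real.cos θ) * g θ)
    (F' := fun y θ => Real.exp (y * Real.cos θ) * Real.cos θ * g θ)
    (bound := fun _ => Real.exp (|x| + 1))
    (Metric.ball_mem_nhds x one_pos)
    (Eventually.of_forall fun y => ((Real.continuous_exp.comp
        (continuous_const.mul Real.continuous_cos)).mul hg).aestronglyMeasurable)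
    (((Real.continuous_exp.comp (continuous_const.mul Real.continuous_cos)).mul
        hg).intervalIntegrable 0 π)
    (((Real.continuous_exp.comp (continuous_const.mul Real.continuous_cos)).mul
        Real.continuous_cos |>.mul hg).aestronglyMeasurable)
    ?_ (intervalIntegrable_const) ?_
  · exact main.2
  · filter_upwards [] with θ _
    intro y hy
    rw [Metric.mem_ball, Real.dist_eq] at hy
    have hyb : |y| ≤ |x| + 1 := by
      cases abs_lt.1 hy with
      | intro h1 h2 => cases abs_le.1 (le_refl |x|) with
        | intro h3 h4 => rw [abs_le]; constructor <;> nlinarith [neg_abs_le x, le_abs_self x]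
    rw [Real.norm_eq_abs, abs_mul, abs_mul, abs_of_nonneg (Real.exp_pos _).le]
    have h1 : Real.exp (y * Real.cos θ) ≤ Real.exp (|x| + 1) := by
      apply Real.exp_le_exp.2
      calc y * Real.cos θ ≤ |y * Real.cos θ| := le_abs_self _
        _ = |y| * |Real.cos θ| := abs_mul _ _
        _ ≤ (|x| + 1) * 1 := by
            apply mul_le_mul hyb (Real.abs_cos_le_one θ) (abs_nonneg _) (by positivity)
        _ = |x| + 1 := mul_one _
    calc Real.exp (y * Real.cos θ) * |Real.cos θ| * |g θ|
        ≤ Real.exp (|x| + 1) * 1 * 1 := by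
          apply mul_le_mul (mul_le_mul h1 (Real.abs_cos_le_one θ) (abs_nonneg _) (Real.exp_pos _).le)
            (hgb θ) (abs_nonneg _) (by positivity)
      _ = Real.exp (|x| + 1) := by ring
  · filter_upwards [] with θ _
    intro y hy
    have h : HasDerivAt (fun y => y * Real.cos θ) (Real.cos θ) y := hasDerivAt_mul_const _
    exact (h.exp).mul_const (g θ)

lemma hasDerivAt_I0 (x : ℝ) : HasDerivAt I0 (I1 x) x := by
  have h := (hasDerivAt_I_integral x (fun _ => 1) continuous_const (by norm_num)).const_mul (1/π)
  unfold I0 I1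
  simpa using h

lemma I_ibp {x : ℝ} (hx : 0 < x) :
    ∫ θ in (0:ℝ)..π, Real.exp (x * Real.cos θ) * Real.cos θ * Real.cos θ
      = π * I0 x - π * I1 x / x := by
  have hderiv : ∀ θ ∈ uIcc (0:ℝ) π, HasDerivAt (fun θ => Real.sin θ * Real.exp (x * Real.cos θ))
      (Real.cos θ * Real.exp (x * Real.cos θ)
        - x * (Real.sin θ ^ 2 * Real.exp (x * Real.cos θ))) θ := by
    intro θ _
    have h1 : HasDerivAt (fun θ => x * Real.cos θ) (x * -Real.sin θ) θ :=
      (Real.hasDerivAt_cos θ).const_mul x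
    have := (Real.hasDerivAt_sin θ).mul h1.exp
    exact this.congr_deriv (by ring)
  have hftc := intervalIntegral.integral_eq_sub_of_hasDerivAt hderiv
    (Continuous.intervalIntegrable (by fun_prop) 0 π)
  simp only [Real.sin_zero, Real.sin_pi, zero_mul, sub_zero] at hftc
  have hsplit : ∫ θ in (0:ℝ)..π, (Real.cos θ * Real.exp (x * Real.cos θ)
        - x * (Real.sin θ ^ 2 * Real.exp (x * Real.cos θ)))
      = (∫ θ in (0:ℝ)..π, Real.cos θ * Real.exp (x * Real.cos θ))
        - x * ∫ θ in (0:ℝ)..π, Real.sin θ ^ 2 * Real.exp (x * Real.cos θ) := by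
    rw [intervalIntegral.integral_sub (Continuous.intervalIntegrable (by fun_prop) 0 π)
      (Continuous.intervalIntegrable (by fun_prop) 0 π),
      intervalIntegral.integral_const_mul]
  rw [hsplit] at hftc
  have hsin : ∫ θ in (0:ℝ)..π, Real.sin θ ^ 2 * Real.exp (x * Real.cos θ)
      = (∫ θ in (0:ℝ)..π, Real.exp (x * Real.cos θ))
        - ∫ θ in (0:ℝ)..π, Real.exp (x * Real.cos θ) * Real.cos θ * Real.cos θ := by
    rw [← intervalIntegral.integral_sub (Continuous.intervalIntegrable (by fun_prop) 0 π)
      (Continuous.intervalIntegrable (by fun_prop) 0 π)]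
    congr 1; ext θ
    have := Real.sin_sq_add_cos_sq θ
    nlinarith [Real.exp_pos (x * Real.cos θ)]
  rw [hsin] at hftc
  have hI0 : (∫ θ in (0:ℝ)..π, Real.exp (x * Real.cos θ)) = π * I0 x := by
    unfold I0; field_simp
  have hI1 : (∫ θ in (0:ℝ)..π, Real.cos θ * Real.exp (x * Real.cos θ)) = π * I1 x := by
    unfold I1
    rw [show (∫ θ in (0:ℝ)..π, Real.cos θ * Real.exp (x * Real.cos θ))
      = ∫ θ in (0:ℝ)..π, Real.exp (x * Real.cos θ) * Real.cos θ by congr 1; ext θ; ring]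
    field_simp
  rw [hI0, hI1] at hftc
  have hxne := ne_of_gt hx
  field_simp at hftc ⊢
  linarith

lemma hasDerivAt_I1 {x : ℝ} (hx : 0 < x) : HasDerivAt I1 (I0 x - I1 x / x) x := by
  have h := (hasDerivAt_I_integral x Real.cos Real.continuous_cos
    (fun θ => Real.abs_cos_le_one θ)).const_mul (1/π)
  rw [I_ibp hx] at h
  have h2 : HasDerivAt I1 ((1/π) * (π * I0 x - π * I1 x / x)) x := h
  convert h2 using 1
  have hpi := Real.pi_ne_zero
  have hxne := ne_of_gt hx
  field_simp













noncomputable def W (x : ℝ) : ℝ := x * (K0 x * I1 x + I0 x * K1 x)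

lemma hasDerivAt_W {x : ℝ} (hx : 0 < x) : HasDerivAt W 0 x := by
  have h := (hasDerivAt_id x).mul
    (((hasDerivAt_K0 hx).mul (hasDerivAt_I1 hx)).add ((hasDerivAt_I0 x).mul (hasDerivAt_K1 hx)))
  have h2 : HasDerivAt W
      (1 * (K0 x * I1 x + I0 x * K1 x)
        + x * (-K1 x * I1 x + K0 x * (I0 x - I1 x / x)
          + (I1 x * K1 x + I0 x * -(K0 x + K1 x / x)))) x := h
  convert h2 using 1
  have hxne := ne_of_gt hx
  field_simp
  ring

lemma W_const {a b : ℝ} (ha : 0 < a) (hab : a < b) : W a = W b := by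
  obtain ⟨c, hc, hceq⟩ := exists_hasDerivAt_eq_slope W (fun _ => 0) hab
    (fun y hy => (hasDerivAt_W (lt_of_lt_of_le ha hy.1)).continuousAt.continuousWithinAt)
    (fun y hy => hasDerivAt_W (lt_trans ha hy.1))
  have : W b - W a = 0 := by
    have hba : b - a ≠ 0 := by linarith
    field_simp at hceq
    linarith [hceq]
  linarith

lemma integrable_exp_neg_cosh_factor {x : ℝ} (hx : 0 < x) :
    IntegrableOn (fun t => Real.exp (-t) * Real.exp (-x * Real.cosh t)) (Ioi 0) := by
  apply Integrable.mono' (g := fun t => Real.exp (-(1:ℝ) * t))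
  · exact exp_neg_integrableOn_Ioi 0 one_pos
  · exact ((Real.continuous_exp.comp continuous_neg).mul
      (Real.continuous_exp.comp (continuous_const.mul Real.continuous_cosh))).aestronglyMeasurable
  · filter_upwards [ae_restrict_mem measurableSet_Ioi] with t _
    rw [Real.norm_eq_abs, abs_mul, abs_of_nonneg (Real.exp_pos _).le,
      abs_of_nonneg (Real.exp_pos _).le]
    calc Real.exp (-t) * Real.exp (-x * Real.cosh t) ≤ Real.exp (-t) * 1 := by
          apply mul_le_mul_of_nonneg_left _ (Real.exp_pos _).le
          rw [Real.exp_le_one_iff]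
          nlinarith [Real.cosh_pos t]
      _ = Real.exp (-(1:ℝ) * t) := by rw [mul_one]; norm_num

lemma K1_decomp {x : ℝ} (hx : 0 < x) :
    K1 x = Real.exp (-x) / x + ∫ t in Ioi (0:ℝ), Real.exp (-t) * Real.exp (-x * Real.cosh t) := by
  have hint1 : IntegrableOn (fun t => Real.sinh t * Real.exp (-x * Real.cosh t)) (Ioi 0) := by
    apply (integrableOn_cosh_pow hx 1).mono'
    · exact (Real.continuous_sinh.mul (Real.continuous_exp.comp
        (continuous_const.mul Real.continuous_cosh))).aestronglyMeasurable
    · filter_upwards [ae_restrict_mem measurableSet_Ioi] with t _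
      rw [Real.norm_eq_abs, abs_mul, abs_of_nonneg (Real.exp_pos _).le, pow_one]
      exact mul_le_mul_of_nonneg_right (abs_sinh_le_cosh t) (Real.exp_pos _).le
  have : K1 x = ∫ t in Ioi (0:ℝ), (Real.sinh t * Real.exp (-x * Real.cosh t)
      + Real.exp (-t) * Real.exp (-x * Real.cosh t)) := by
    unfold K1
    congr 1; ext t
    have hid : Real.cosh t - Real.sinh t = Real.exp (-t) := Real.cosh_sub_sinh t
    nlinarith [Real.exp_pos (-x * Real.cosh t)]
  rw [this, integral_add hint1 (integrable_exp_neg_cosh_factor hx), sinh_exp_integral hx]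

lemma xK1_bounds {x : ℝ} (hx : 0 < x) :
    Real.exp (-x) ≤ x * K1 x ∧ x * K1 x ≤ Real.exp (-x) + x := by
  have hR0 : 0 ≤ ∫ t in Ioi (0:ℝ), Real.exp (-t) * Real.exp (-x * Real.cosh t) :=
    setIntegral_nonneg measurableSet_Ioi (fun t _ => by positivity)
  have hR1 : (∫ t in Ioi (0:ℝ), Real.exp (-t) * Real.exp (-x * Real.cosh t)) ≤ 1 := by
    rw [← integral_exp_neg_Ioi_zero]
    apply setIntegral_mono_on (integrable_exp_neg_cosh_factor hx)
      ((exp_neg_integrableOn_Ioi 0 one_pos).congr_fun (fun t _ => by norm_num) measurableSet_Ioi)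
      measurableSet_Ioi
    intro t _
    calc Real.exp (-t) * Real.exp (-x * Real.cosh t) ≤ Real.exp (-t) * 1 := by
          apply mul_le_mul_of_nonneg_left _ (Real.exp_pos _).le
          rw [Real.exp_le_one_iff]
          nlinarith [Real.cosh_pos t]
      _ = Real.exp (-t) := mul_one _
  have hd := K1_decomp hx
  constructor
  · rw [hd]; rw [mul_add]; rw [mul_div_cancel₀ _ (ne_of_gt hx)]; nlinarith
  · rw [hd]; rw [mul_add]; rw [mul_div_cancel₀ _ (ne_of_gt hx)]; nlinarith

lemma tendsto_xK1 : Tendsto (fun x => x * K1 x) (𝓝[>] (0:ℝ)) (𝓝 1) := by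
  apply tendsto_of_tendsto_of_tendsto_of_le_of_le'
    (g := fun x : ℝ => Real.exp (-x)) (h := fun x : ℝ => Real.exp (-x) + x)
  · have : Tendsto (fun x : ℝ => Real.exp (-x)) (𝓝 0) (𝓝 1) := by
      have := (Real.continuous_exp.comp continuous_neg).tendsto 0
      simpa [Function.comp_def] using this
    exact this.mono_left nhdsWithin_le_nhds
  · have : Tendsto (fun x : ℝ => Real.exp (-x) + x) (𝓝 0) (𝓝 1) := by
      have := ((Real.continuous_exp.comp continuous_neg).add continuous_id).tendsto 0
      simpa [Function.comp_def, Pi.add_def] using this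
    exact this.mono_left nhdsWithin_le_nhds
  · filter_upwards [self_mem_nhdsWithin] with x hx
    exact (xK1_bounds hx).1
  · filter_upwards [self_mem_nhdsWithin] with x hx
    exact (xK1_bounds hx).2

lemma I0_bounds {x : ℝ} (hx : 0 < x) : Real.exp (-x) ≤ I0 x ∧ I0 x ≤ Real.exp x := by
  have hpi := Real.pi_pos
  have hlow : ∀ θ ∈ Icc (0:ℝ) π, Real.exp (-x) ≤ Real.exp (x * Real.cos θ) := by
    intro θ _
    apply Real.exp_le_exp.2
    nlinarith [Real.neg_one_le_cos θ]
  have hhigh : ∀ θ ∈ Icc (0:ℝ) π, Real.exp (x * Real.cos θ) ≤ Real.exp x := by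
    intro θ _
    apply Real.exp_le_exp.2
    nlinarith [Real.cos_le_one θ]
  have hci : IntervalIntegrable (fun θ => Real.exp (x * Real.cos θ)) volume 0 π :=
    Continuous.intervalIntegrable (by fun_prop) 0 π
  constructor
  · have h := intervalIntegral.integral_mono_on hpi.le (intervalIntegrable_const) hci hlow
    simp only [intervalIntegral.integral_const, smul_eq_mul, sub_zero] at h
    unfold I0
    have heq : Real.exp (-x) = (1/π) * (π * Real.exp (-x)) := by field_simp
    rw [heq]
    exact mul_le_mul_of_nonneg_left h (by positivity)
  · have h := intervalIntegral.integral_mono_on hpi.le hci (intervalIntegrable_const) hhigh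
    simp only [intervalIntegral.integral_const, smul_eq_mul, sub_zero] at h
    unfold I0
    have heq : Real.exp x = (1/π) * (π * Real.exp x) := by field_simp
    rw [heq]
    exact mul_le_mul_of_nonneg_left h (by positivity)

lemma tendsto_I0 : Tendsto I0 (𝓝[>] (0:ℝ)) (𝓝 1) := by
  apply tendsto_of_tendsto_of_tendsto_of_le_of_le'
    (g := fun x : ℝ => Real.exp (-x)) (h := fun x : ℝ => Real.exp x)
  · have : Tendsto (fun x : ℝ => Real.exp (-x)) (𝓝 0) (𝓝 1) := by
      have := (Real.continuous_exp.comp continuous_neg).tendsto 0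
      simpa [Function.comp_def] using this
    exact this.mono_left nhdsWithin_le_nhds
  · have := Real.continuous_exp.tendsto 0
    rw [Real.exp_zero] at this
    exact this.mono_left nhdsWithin_le_nhds
  · filter_upwards [self_mem_nhdsWithin] with x hx
    exact (I0_bounds hx).1
  · filter_upwards [self_mem_nhdsWithin] with x hx
    exact (I0_bounds hx).2

lemma I1_abs_le {x : ℝ} (hx : 0 < x) : |I1 x| ≤ Real.exp x := by
  have hpi := Real.pi_pos
  have h := intervalIntegral.norm_integral_le_of_norm_le_const
    (C := Real.exp x) (f := fun θ => Real.exp (x * Real.cos θ) * Real.cos θ)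
    (a := (0:ℝ)) (b := π) ?_
  · unfold I1
    rw [abs_mul, abs_of_nonneg (by positivity : (0:ℝ) ≤ 1/π)]
    rw [Real.norm_eq_abs, abs_of_nonneg (by linarith : (0:ℝ) ≤ π - 0)] at h
    calc (1/π) * |∫ θ in (0:ℝ)..π, Real.exp (x * Real.cos θ) * Real.cos θ|
        ≤ (1/π) * (Real.exp x * (π - 0)) := by
          apply mul_le_mul_of_nonneg_left _ (by positivity)
          rw [← Real.norm_eq_abs]
          exact h
      _ = Real.exp x := by rw [sub_zero]; field_simp
  · intro θ _
    rw [Real.norm_eq_abs, abs_mul, abs_of_nonneg (Real.exp_pos _).le]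
    calc Real.exp (x * Real.cos θ) * |Real.cos θ| ≤ Real.exp x * 1 := by
          apply mul_le_mul _ (Real.abs_cos_le_one θ) (abs_nonneg _) (Real.exp_pos _).le
          apply Real.exp_le_exp.2
          nlinarith [Real.cos_le_one θ]
      _ = Real.exp x := mul_one _

lemma K0_nonneg (x : ℝ) : 0 ≤ K0 x :=
  setIntegral_nonneg measurableSet_Ioi (fun t _ => (Real.exp_pos _).le)

lemma K0_le {x : ℝ} (hx : 0 < x) : K0 x ≤ Real.sqrt (π / (x/4)) / 2 := by
  rw [← integral_gaussian_Ioi (x/4)]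
  apply setIntegral_mono_on (by simpa using integrableOn_cosh_pow hx 0)
    ((integrable_exp_neg_mul_sq (by positivity : (0:ℝ) < x/4)).integrableOn)
    measurableSet_Ioi
  intro t ht
  apply Real.exp_le_exp.2
  have := cosh_lower t (le_of_lt ht)
  nlinarith

lemma tendsto_term1 : Tendsto (fun x => (x * K0 x) * I1 x) (𝓝[>] (0:ℝ)) (𝓝 0) := by
  have hb : ∀ᶠ x in 𝓝[>] (0:ℝ), ‖(x * K0 x) * I1 x‖
      ≤ (fun x => Real.sqrt (4 * π * x) / 2 * Real.exp x) x := by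
    filter_upwards [self_mem_nhdsWithin] with x hx
    have hx' : (0:ℝ) < x := hx
    rw [Real.norm_eq_abs, abs_mul, abs_of_nonneg (mul_nonneg hx'.le (K0_nonneg x))]
    have h1 : x * K0 x ≤ Real.sqrt (4 * π * x) / 2 := by
      have h := K0_le hx'
      have heq : x * (Real.sqrt (π / (x/4)) / 2) = Real.sqrt (4 * π * x) / 2 := by
        rw [show (4:ℝ) * π * x = x^2 * (π / (x/4)) by field_simp]
        rw [Real.sqrt_mul (sq_nonneg x), Real.sqrt_sq hx'.le]
        ring
      calc x * K0 x ≤ x * (Real.sqrt (π / (x/4)) / 2) :=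
            mul_le_mul_of_nonneg_left h hx'.le
        _ = Real.sqrt (4 * π * x) / 2 := heq
    exact mul_le_mul h1 (I1_abs_le hx') (abs_nonneg _) (by positivity)
  have hc : Continuous (fun x : ℝ => Real.sqrt (4 * π * x) / 2 * Real.exp x) := by
    fun_prop
  have hg := hc.tendsto 0
  simp only [mul_zero, Real.sqrt_zero, zero_div, zero_mul] at hg
  exact squeeze_zero_norm' hb (hg.mono_left nhdsWithin_le_nhds)

lemma tendsto_W : Tendsto W (𝓝[>] (0:ℝ)) (𝓝 1) := by
  have heq : ∀ x : ℝ, W x = (x * K0 x) * I1 x + I0 x * (x * K1 x) := by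
    intro x; unfold W; ring
  have h := tendsto_term1.add (tendsto_I0.mul tendsto_xK1)
  rw [show (0:ℝ) + 1 * 1 = 1 by norm_num] at h
  exact h.congr (fun x => (heq x).symm)


/-- Wronskian identity for the modified Bessel functions:
`K₀(x)·I₁(x) + I₀(x)·K₁(x) = 1/x` for every `x > 0`. -/
theorem bessel_wronskian (x : ℝ) (hx : 0 < x) :
    K0 x * I1 x + I0 x * K1 x = 1 / x := by
  have hWx : ∀ y : ℝ, 0 < y → W y = W x := by
    intro y hy
    rcases lt_trichotomy y x with h | h | h
    · exact W_const hy h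
    · rw [h]
    · exact (W_const hx h).symm
  have ht : Tendsto W (𝓝[>] (0:ℝ)) (𝓝 (W x)) := by
    refine Tendsto.congr' ?_
      (tendsto_const_nhds : Tendsto (fun _ : ℝ => W x) (𝓝[>] (0:ℝ)) (𝓝 (W x)))
    filter_upwards [self_mem_nhdsWithin] with y hy
    exact (hWx y hy).symm
  have hW1 : W x = 1 := tendsto_nhds_unique ht tendsto_W
  have : x * (K0 x * I1 x + I0 x * K1 x) = 1 := hW1
  field_simp
  linarith
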